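/- Let E be a real inner product space, let b ≥ 1 be an integer, M ≥ 0, and let g_0, g_1, …, g_b ∈ E satisfy ‖g_j‖ ≤ M for all j ∈ {0,1,…,b}. Define h : ℝ^b → ℝ by h(a) = ‖Σ_{j=1}^b a_j (g_0 − g_j)‖². Then h is differentiable, and for every a in the probability simplex S_b (a_i ≥ 0, Σ_i a_i = 1) and every i ∈ {1,…,b}, the partial derivative satisfies |∂h/∂a_i (a)| ≤ 8M²; equivalently, the ℓ∞-norm of the gradient of h at a is at most 8M². -/

import Mathlib

/-- **Lemma 1** of the appendix: with `‖g_j‖ ≤ M` for `j ∈ {0,…,b}`, the function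
`h(a) = ‖∑_{j=1}^b a_j (g₀ − g_j)‖²` is differentiable and on the probability
simplex each partial derivative satisfies `|∂h/∂a_i| ≤ 8M²` (equivalently, the
`ℓ∞`-norm of the gradient of `h` is at most `8M²`). -/
theorem forecast_error_gradient_bound
    {E : Type*} [NormedAddCommGroup E] [InnerProductSpace ℝ E]
    (b : ℕ) (hb : 1 ≤ b) (M : ℝ) (hM : 0 ≤ M)
    (g₀ : E) (g : Fin b → E)
    (hg₀ : ‖g₀‖ ≤ M) (hg : ∀ j : Fin b, ‖g j‖ ≤ M)
    (h : (Fin b → ℝ) → ℝ)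
    (hh : ∀ a : Fin b → ℝ, h a = ‖∑ j : Fin b, a j • (g₀ - g j)‖ ^ 2) :
    Differentiable ℝ h ∧
      ∀ a : Fin b → ℝ, (∀ i, 0 ≤ a i) → (∑ i, a i) = 1 →
        ∀ i : Fin b, |fderiv ℝ h a (Pi.single i 1)| ≤ 8 * M ^ 2 := by
  set v : Fin b → E := fun j => g₀ - g j with hv
  have hvM : ∀ j, ‖v j‖ ≤ 2 * M := by
    intro j
    calc ‖g₀ - g j‖ ≤ ‖g₀‖ + ‖g j‖ := norm_sub_le _ _
      _ ≤ M + M := add_le_add hg₀ (hg j)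
      _ = 2 * M := by ring
  set L : (Fin b → ℝ) →L[ℝ] E :=
    ∑ j : Fin b, (ContinuousLinearMap.proj j).smulRight (v j) with hL
  have hLa : ∀ a : Fin b → ℝ, L a = ∑ j : Fin b, a j • v j := by
    intro a
    simp [hL, ContinuousLinearMap.sum_apply]
  have hEq : h = fun a => ‖L a‖ ^ 2 := by
    funext a; rw [hh a, hLa a]
  have hderiv : ∀ a : Fin b → ℝ,
      HasFDerivAt h (2 • (innerSL ℝ (L a)).comp L) a := by
    intro a
    rw [hEq]
    exact (L.hasFDerivAt (x := a)).norm_sq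
  constructor
  · exact fun a => (hderiv a).differentiableAt
  · intro a ha hsum i
    rw [(hderiv a).fderiv]
    have hLsingle : L (Pi.single i 1) = v i := by
      rw [hLa]
      simp [Pi.single_apply, Finset.sum_ite_eq', Finset.mem_univ]
    have hLnorm : ‖L a‖ ≤ 2 * M := by
      rw [hLa]
      calc ‖∑ j : Fin b, a j • v j‖ ≤ ∑ j : Fin b, ‖a j • v j‖ := norm_sum_le _ _
        _ ≤ ∑ j : Fin b, a j * (2 * M) := by
            apply Finset.sum_le_sum
            intro j _
            rw [norm_smul, Real.norm_eq_abs, abs_of_nonneg (ha j)]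
            exact mul_le_mul_of_nonneg_left (hvM j) (ha j)
        _ = (∑ j : Fin b, a j) * (2 * M) := by rw [← Finset.sum_mul]
        _ = 2 * M := by rw [hsum, one_mul]
    simp only [ContinuousLinearMap.smul_apply, ContinuousLinearMap.comp_apply,
      innerSL_apply_apply, hLsingle, smul_eq_mul, nsmul_eq_mul, Nat.cast_ofNat]
    calc |2 * inner ℝ (L a) (v i)| = 2 * |(inner ℝ (L a) (v i) : ℝ)| := by
          rw [abs_mul]; norm_num
      _ ≤ 2 * (‖L a‖ * ‖v i‖) := by
          apply mul_le_mul_of_nonneg_left (abs_real_inner_le_norm _ _) (by norm_num)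
      _ ≤ 2 * ((2 * M) * (2 * M)) := by
          apply mul_le_mul_of_nonneg_left _ (by norm_num)
          exact mul_le_mul hLnorm (hvM i) (norm_nonneg _) (by positivity)
      _ = 8 * M ^ 2 := by ring
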